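/- For every a ∈ ℝ^{n+1} with a(ζ_j) ≠ 0 for all j, the functional 𝕁_P is differentiable at a and its gradient satisfies (1/2) ∇𝕁_P(a) = T_n a − T_γ(a) b = [ T_n − T_n(a) ] a. -/

import Mathlib

open Finset Complex Matrix

noncomputable section

/-- The point `ζ_j = exp(iπ j / N)` of the discrete unit circle `𝕋_{2N}`. -/
def zeta (N : ℕ) (j : ℤ) : ℂ := Complex.exp (Real.pi * Complex.I * j / N)

/-- The index set `j = -N+1, …, N`. -/
def Idx (N : ℕ) : Finset ℤ := Finset.Icc (-(N : ℤ) + 1) (N : ℤ)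

/-- `a(ζ) = Σ_{k=0}^n a_k ζ^{-k}`. -/
def evC {n : ℕ} (a : Fin (n + 1) → ℝ) (z : ℂ) : ℂ :=
  ∑ k : Fin (n + 1), (a k : ℂ) * z ^ (-(k.val : ℤ))

/-- The symmetric Toeplitz matrix `T_n` with `(i,j)` entry `c_{|i-j|}`. -/
def Toep {n : ℕ} (c : Fin (n + 1) → ℝ) : Matrix (Fin (n + 1)) (Fin (n + 1)) ℝ :=
  fun i j => c ⟨max ((i : ℕ) - (j : ℕ)) ((j : ℕ) - (i : ℕ)),
    by have := i.isLt; have := j.isLt; omega⟩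

/-- `P(ζ) = b(ζ) b(ζ^{-1})`. -/
def PPd {n : ℕ} (b : Fin (n + 1) → ℝ) (z : ℂ) : ℂ := evC b z * evC b z⁻¹

/-- `𝕁_P(a) = aᵀ T_n a − (1/2N) Σ_j P(ζ_j) log( a(ζ_j) a(ζ_j^{-1}) )`. -/
def Jd (N : ℕ) {n : ℕ} (c b a : Fin (n + 1) → ℝ) : ℝ :=
  dotProduct a ((Toep c).mulVec a) -
    (∑ j ∈ Idx N, (PPd b (zeta N j)).re *
        Real.log ((evC a (zeta N j) * evC a (zeta N j)⁻¹).re)) / (2 * N)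

/-- `γ_t(a) = (1/2N) Σ_j ζ_j^t b(ζ_j)/a(ζ_j)` (a real number). -/
def gam (N : ℕ) {n : ℕ} (b a : Fin (n + 1) → ℝ) (t : ℤ) : ℝ :=
  ((∑ j ∈ Idx N, zeta N j ^ t * evC b (zeta N j) / evC a (zeta N j)) / (2 * N)).re

/-- The matrix `T_γ(a)` with `(i,j)` entry `γ_{j−i}(a)`. -/
def Tgam (N : ℕ) {n : ℕ} (b a : Fin (n + 1) → ℝ) :
    Matrix (Fin (n + 1)) (Fin (n + 1)) ℝ :=
  fun i j => gam N b a ((j.val : ℤ) - (i.val : ℤ))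

/-- `c̃_k(a) = (1/2N) Σ_j ζ_j^k P(ζ_j)/( a(ζ_j) a(ζ_j^{-1}) )` (a real number). -/
def ctil (N : ℕ) {n : ℕ} (b a : Fin (n + 1) → ℝ) (k : ℤ) : ℝ :=
  ((∑ j ∈ Idx N, zeta N j ^ k * PPd b (zeta N j) /
      (evC a (zeta N j) * evC a (zeta N j)⁻¹)) / (2 * N)).re

/-- The symmetric Toeplitz matrix `T_n(a)` with `(i,j)` entry `c̃_{|i−j|}(a)`. -/
def TnA (N : ℕ) {n : ℕ} (b a : Fin (n + 1) → ℝ) :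
    Matrix (Fin (n + 1)) (Fin (n + 1)) ℝ :=
  fun i j => ctil N b a ((max ((i : ℕ) - (j : ℕ)) ((j : ℕ) - (i : ℕ)) : ℕ) : ℤ)

namespace Stmt6Aux

lemma zeta_ne_zero (N : ℕ) (j : ℤ) : zeta N j ≠ 0 := Complex.exp_ne_zero _

lemma conj_zeta (N : ℕ) (j : ℤ) : (starRingEnd ℂ) (zeta N j) = (zeta N j)⁻¹ := by
  rw [zeta, ← Complex.exp_conj, ← Complex.exp_neg]
  congr 1
  simp only [map_div₀, _root_.map_mul, Complex.conj_ofReal, Complex.conj_I, map_intCast,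
    map_natCast]
  ring

lemma conj_evC {n : ℕ} (a : Fin (n+1) → ℝ) (z : ℂ) :
    (starRingEnd ℂ) (evC a z) = evC a ((starRingEnd ℂ) z) := by
  simp [evC, map_sum, _root_.map_mul, Complex.conj_ofReal, map_zpow₀]

lemma evC_inv {n : ℕ} (a : Fin (n+1) → ℝ) (N : ℕ) (j : ℤ) :
    evC a (zeta N j)⁻¹ = (starRingEnd ℂ) (evC a (zeta N j)) := by
  rw [conj_evC, conj_zeta]

lemma evC_mul_inv {n : ℕ} (a : Fin (n+1) → ℝ) (N : ℕ) (j : ℤ) :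
    evC a (zeta N j) * evC a (zeta N j)⁻¹ = (Complex.normSq (evC a (zeta N j)) : ℂ) := by
  rw [evC_inv, Complex.mul_conj]

lemma PPd_eq {n : ℕ} (b : Fin (n+1) → ℝ) (N : ℕ) (j : ℤ) :
    PPd b (zeta N j) = (Complex.normSq (evC b (zeta N j)) : ℂ) := by
  rw [PPd]; exact evC_mul_inv b N j

lemma evC_inv_eq_sum {n : ℕ} (a : Fin (n+1) → ℝ) (z : ℂ) :
    evC a z⁻¹ = ∑ k : Fin (n+1), (a k : ℂ) * z ^ (k.val : ℤ) := by
  simp [evC, _root_.inv_zpow, _root_.zpow_neg, inv_inv]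

lemma sum_zpow_mul {n : ℕ} (x : Fin (n+1) → ℝ) (z : ℂ) (hz : z ≠ 0) (i : Fin (n+1)) :
    ∑ k : Fin (n+1), (x k : ℂ) * z ^ ((k.val : ℤ) - (i.val : ℤ)) =
      z ^ (-(i.val : ℤ)) * evC x z⁻¹ := by
  rw [evC_inv_eq_sum, Finset.mul_sum]
  refine Finset.sum_congr rfl fun k _ => ?_
  rw [sub_eq_add_neg, zpow_add₀ hz]
  ring

lemma re_mul_ofReal (w : ℂ) (r : ℝ) : (w * (r:ℂ)).re = w.re * r := by
  simp [Complex.mul_re]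

lemma re_ofReal_mul (r : ℝ) (w : ℂ) : ((r:ℂ) * w).re = r * w.re := by
  simp [Complex.mul_re]

lemma re_div_twoN (N : ℕ) (w : ℂ) : (w / (2 * (N:ℂ))).re = w.re / (2 * (N:ℝ)) := by
  rw [show (2 * (N:ℂ)) = (((2 * (N:ℝ)):ℝ):ℂ) by push_cast; ring,
    div_eq_mul_inv, ← Complex.ofReal_inv, re_mul_ofReal, div_eq_mul_inv]

end Stmt6Aux

namespace Stmt6Aux

/-- The evaluation `v ↦ evC v z` as a continuous linear map. -/
def LzC (n : ℕ) (z : ℂ) : (Fin (n+1) → ℝ) →L[ℝ] ℂ :=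
  ∑ k : Fin (n+1), z ^ (-(k.val : ℤ)) • (Complex.ofRealCLM.comp (ContinuousLinearMap.proj k))

lemma LzC_apply {n : ℕ} (z : ℂ) (v : Fin (n+1) → ℝ) : LzC n z v = evC v z := by
  simp [LzC, evC, ContinuousLinearMap.sum_apply, mul_comm]

/-- Pull real weights into the real part of a complex sum with a `1/(2N)` factor. -/
lemma re_weighted_sum {ι : Type*} (s : Finset ι) (x : ι → ℝ) (f : ι → ℂ) (N : ℕ) :
    ∑ i ∈ s, x i * ((f i) / (2 * (N:ℂ))).re = ((∑ i ∈ s, (x i : ℂ) * f i) / (2 * (N:ℂ))).re := by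
  rw [Finset.sum_div, Complex.re_sum]
  refine Finset.sum_congr rfl fun i _ => ?_
  rw [re_div_twoN, re_div_twoN, re_ofReal_mul]
  ring

lemma gam_contract (N : ℕ) {n : ℕ} (b a x : Fin (n+1) → ℝ) (i : Fin (n+1)) :
    ∑ k : Fin (n+1), gam N b a ((k.val : ℤ) - (i.val : ℤ)) * x k =
      ((∑ j ∈ Idx N, zeta N j ^ (-(i.val : ℤ)) * evC x (zeta N j)⁻¹ *
          evC b (zeta N j) / evC a (zeta N j)) / (2 * (N:ℂ))).re := by
  have : ∀ k : Fin (n+1), gam N b a ((k.val : ℤ) - (i.val : ℤ)) * x k =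
      x k * ((∑ j ∈ Idx N, zeta N j ^ ((k.val : ℤ) - (i.val : ℤ)) *
        evC b (zeta N j) / evC a (zeta N j)) / (2 * (N:ℂ))).re := fun k => by
    rw [gam, mul_comm]
  rw [Finset.sum_congr rfl fun k _ => this k, re_weighted_sum]
  congr 2
  have h1 : ∀ k : Fin (n+1), (x k : ℂ) * ∑ j ∈ Idx N, zeta N j ^ ((k.val:ℤ)-(i.val:ℤ)) *
        evC b (zeta N j) / evC a (zeta N j)
      = ∑ j ∈ Idx N, (x k : ℂ) * zeta N j ^ ((k.val:ℤ)-(i.val:ℤ)) *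
        (evC b (zeta N j) / evC a (zeta N j)) := fun k => by
    rw [Finset.mul_sum]; exact Finset.sum_congr rfl fun j _ => by ring
  refine ((Finset.sum_congr rfl fun k _ => h1 k).trans (Finset.sum_comm.trans ?_))
  refine Finset.sum_congr rfl fun j _ => ?_
  rw [← Finset.sum_mul, sum_zpow_mul x (zeta N j) (zeta_ne_zero N j) i]
  ring

end Stmt6Aux

namespace Stmt6Aux

lemma ctil_neg (N : ℕ) {n : ℕ} (b a : Fin (n+1) → ℝ) (t : ℤ) :
    ctil N b a (-t) = ctil N b a t := by
  have hS : (∑ j ∈ Idx N, zeta N j ^ (-t) * PPd b (zeta N j) /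
      (evC a (zeta N j) * evC a (zeta N j)⁻¹)) =
      (starRingEnd ℂ) (∑ j ∈ Idx N, zeta N j ^ t * PPd b (zeta N j) /
      (evC a (zeta N j) * evC a (zeta N j)⁻¹)) := by
    rw [map_sum]
    refine Finset.sum_congr rfl fun j _ => ?_
    rw [map_div₀, _root_.map_mul, map_zpow₀, conj_zeta, PPd_eq, Complex.conj_ofReal,
      evC_mul_inv, Complex.conj_ofReal, _root_.inv_zpow, ← _root_.zpow_neg]
  rw [ctil, ctil, hS, re_div_twoN, re_div_twoN, Complex.conj_re]

lemma ctil_max (N : ℕ) {n : ℕ} (b a : Fin (n+1) → ℝ) (i k : Fin (n+1)) :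
    ctil N b a ((max ((i.val : ℕ) - (k.val : ℕ)) ((k.val : ℕ) - (i.val : ℕ)) : ℕ) : ℤ) =
      ctil N b a ((k.val : ℤ) - (i.val : ℤ)) := by
  rcases le_total (i.val) (k.val) with h | h
  · congr 1; omega
  · rw [show ((max ((i.val:ℕ) - (k.val:ℕ)) ((k.val:ℕ) - (i.val:ℕ)) : ℕ) : ℤ)
        = -((k.val:ℤ) - (i.val:ℤ)) by omega, ctil_neg]

lemma ctil_contract (N : ℕ) {n : ℕ} (b a : Fin (n+1) → ℝ)
    (ha : ∀ j ∈ Idx N, evC a (zeta N j) ≠ 0) (i : Fin (n+1)) :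
    ∑ k : Fin (n+1), ctil N b a ((k.val : ℤ) - (i.val : ℤ)) * a k =
      ((∑ j ∈ Idx N, zeta N j ^ (-(i.val : ℤ)) * evC b (zeta N j)⁻¹ *
          evC b (zeta N j) / evC a (zeta N j)) / (2 * (N:ℂ))).re := by
  have this1 : ∀ k : Fin (n+1), ctil N b a ((k.val : ℤ) - (i.val : ℤ)) * a k =
      a k * ((∑ j ∈ Idx N, zeta N j ^ ((k.val : ℤ) - (i.val : ℤ)) * PPd b (zeta N j) /
        (evC a (zeta N j) * evC a (zeta N j)⁻¹)) / (2 * (N:ℂ))).re := fun k => by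
    rw [ctil, mul_comm]
  rw [Finset.sum_congr rfl fun k _ => this1 k, re_weighted_sum]
  congr 2
  have h1 : ∀ k : Fin (n+1), (a k : ℂ) * ∑ j ∈ Idx N, zeta N j ^ ((k.val:ℤ)-(i.val:ℤ)) *
        PPd b (zeta N j) / (evC a (zeta N j) * evC a (zeta N j)⁻¹)
      = ∑ j ∈ Idx N, (a k : ℂ) * zeta N j ^ ((k.val:ℤ)-(i.val:ℤ)) *
        (PPd b (zeta N j) / (evC a (zeta N j) * evC a (zeta N j)⁻¹)) := fun k => by
    rw [Finset.mul_sum]; exact Finset.sum_congr rfl fun j _ => by ring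
  refine ((Finset.sum_congr rfl fun k _ => h1 k).trans (Finset.sum_comm.trans ?_))
  refine Finset.sum_congr rfl fun j hj => ?_
  rw [← Finset.sum_mul, sum_zpow_mul a (zeta N j) (zeta_ne_zero N j) i]
  have hA := ha j hj
  have hA' : evC a (zeta N j)⁻¹ ≠ 0 := by
    rw [evC_inv]; exact star_ne_zero.mpr hA
  rw [PPd, ← div_div, mul_assoc, mul_comm (evC a (zeta N j)⁻¹), div_mul_cancel₀ _ hA']
  ring

lemma key1 {n : ℕ} (b : Fin (n+1) → ℝ) (N : ℕ) (j : ℤ) (A V : ℂ) :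
    (PPd b (zeta N j)).re * ((A.re * A.re + A.im * A.im)⁻¹ *
      (A.re * V.re + A.re * V.re + (A.im * V.im + A.im * V.im)))
      = 2 * (PPd b (zeta N j) * V / A).re := by
  rw [PPd_eq]
  simp only [Complex.div_re, Complex.mul_re, Complex.mul_im, Complex.normSq_apply,
    Complex.ofReal_re, Complex.ofReal_im]
  ring

lemma key2 (N : ℕ) {n : ℕ} (b a v : Fin (n+1) → ℝ) :
    ∑ i : Fin (n+1), ((Tgam N b a).mulVec b) i * v i =
      (∑ j ∈ Idx N, (PPd b (zeta N j) * evC v (zeta N j) / evC a (zeta N j)).re) / (2 * (N:ℝ)) := by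
  have h1 : ∀ i : Fin (n+1), ((Tgam N b a).mulVec b) i =
      ((∑ j ∈ Idx N, zeta N j ^ (-(i.val:ℤ)) * evC b (zeta N j)⁻¹ *
        evC b (zeta N j) / evC a (zeta N j)) / (2 * (N:ℂ))).re := fun i =>
    gam_contract N b a b i
  calc ∑ i, ((Tgam N b a).mulVec b) i * v i
      = ∑ i : Fin (n+1), v i * ((∑ j ∈ Idx N, zeta N j ^ (-(i.val:ℤ)) * evC b (zeta N j)⁻¹ *
          evC b (zeta N j) / evC a (zeta N j)) / (2 * (N:ℂ))).re := by
        refine Finset.sum_congr rfl fun i _ => ?_; rw [h1 i]; ring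
    _ = ((∑ i : Fin (n+1), (v i : ℂ) * ∑ j ∈ Idx N, zeta N j ^ (-(i.val:ℤ)) * evC b (zeta N j)⁻¹ *
          evC b (zeta N j) / evC a (zeta N j)) / (2 * (N:ℂ))).re := re_weighted_sum _ _ _ _
    _ = ((∑ j ∈ Idx N, PPd b (zeta N j) * evC v (zeta N j) / evC a (zeta N j)) / (2 * (N:ℂ))).re := by
        congr 2
        have h2 : ∀ i : Fin (n+1), (v i:ℂ) * ∑ j ∈ Idx N, zeta N j ^ (-(i.val:ℤ)) *
              evC b (zeta N j)⁻¹ * evC b (zeta N j) / evC a (zeta N j)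
            = ∑ j ∈ Idx N, (v i:ℂ) * zeta N j ^ (-(i.val:ℤ)) *
              (evC b (zeta N j)⁻¹ * evC b (zeta N j) / evC a (zeta N j)) := fun i => by
          rw [Finset.mul_sum]; exact Finset.sum_congr rfl fun j _ => by ring
        refine ((Finset.sum_congr rfl fun i _ => h2 i).trans (Finset.sum_comm.trans ?_))
        refine Finset.sum_congr rfl fun j _ => ?_
        rw [← Finset.sum_mul, show (∑ i : Fin (n+1), (v i:ℂ) * zeta N j ^ (-(i.val:ℤ)))
          = evC v (zeta N j) from rfl, PPd]
        ring
    _ = (∑ j ∈ Idx N, (PPd b (zeta N j) * evC v (zeta N j) / evC a (zeta N j)).re) / (2 * (N:ℝ)) := by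
        rw [re_div_twoN, Complex.re_sum]

end Stmt6Aux

namespace Stmt6Aux

lemma Toep_symm {n : ℕ} (c : Fin (n+1) → ℝ) (i k : Fin (n+1)) : Toep c i k = Toep c k i := by
  unfold Toep
  congr 1
  exact Fin.ext (by simp [Nat.max_comm] : _)

end Stmt6Aux


open Stmt6Aux

/-- `𝕁_P` is differentiable at every `a` with `a(ζ_j) ≠ 0` for all `j`,
and `(1/2)∇𝕁_P(a) = T_n a − T_γ(a) b = [T_n − T_n(a)] a`. -/
theorem stmt6 (N n : ℕ) (hn : 1 ≤ n) (hNn : n < N)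
    (c b : Fin (n + 1) → ℝ) (hb0 : b 0 = 1)
    (a : Fin (n + 1) → ℝ) (ha : ∀ j ∈ Idx N, evC a (zeta N j) ≠ 0) :
    DifferentiableAt ℝ (Jd N c b) a ∧
    (∀ v : Fin (n + 1) → ℝ, fderiv ℝ (Jd N c b) a v =
      ∑ i : Fin (n + 1),
        (2 * (((Toep c).mulVec a - (Tgam N b a).mulVec b) i)) * v i) ∧
    (Toep c).mulVec a - (Tgam N b a).mulVec b = (Toep c - TnA N b a).mulVec a := by
  classical
  -- the linear maps giving real and imaginary part of `evC · (zeta N j)`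
  set U : ℤ → ((Fin (n+1) → ℝ) →L[ℝ] ℝ) :=
    fun j => Complex.reCLM.comp (LzC n (zeta N j)) with hU
  set W : ℤ → ((Fin (n+1) → ℝ) →L[ℝ] ℝ) :=
    fun j => Complex.imCLM.comp (LzC n (zeta N j)) with hW
  have hUx : ∀ (j : ℤ) (x : Fin (n+1) → ℝ), U j x = (evC x (zeta N j)).re := by
    intro j x
    simp [hU, ContinuousLinearMap.comp_apply, Complex.reCLM_apply, LzC_apply]
  have hWx : ∀ (j : ℤ) (x : Fin (n+1) → ℝ), W j x = (evC x (zeta N j)).im := by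
    intro j x
    simp [hW, ContinuousLinearMap.comp_apply, Complex.imCLM_apply, LzC_apply]
  -- derivative of the quadratic part
  set Φ₁ : (Fin (n+1) → ℝ) →L[ℝ] ℝ :=
    ∑ i : Fin (n+1), ∑ k : Fin (n+1), Toep c i k •
      ((a i) • ContinuousLinearMap.proj k + (a k) • ContinuousLinearMap.proj i) with hΦ₁
  have hQ : HasFDerivAt (fun x : Fin (n+1) → ℝ =>
      ∑ i : Fin (n+1), ∑ k : Fin (n+1), Toep c i k * (x i * x k)) Φ₁ a :=
    HasFDerivAt.fun_sum fun i _ => HasFDerivAt.fun_sum fun k _ =>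
      ((hasFDerivAt_apply i a).mul (hasFDerivAt_apply k a)).const_mul _
  -- derivative of the logarithmic part
  set D : ℤ → ((Fin (n+1) → ℝ) →L[ℝ] ℝ) := fun j =>
    (U j a * U j a + W j a * W j a)⁻¹ •
      ((U j a • U j + U j a • U j) + (W j a • W j + W j a • W j)) with hD
  have hlog : ∀ j ∈ Idx N, HasFDerivAt
      (fun x : Fin (n+1) → ℝ => Real.log ((evC x (zeta N j) * evC x (zeta N j)⁻¹).re))
      (D j) a := by
    intro j hj
    have hfe : (fun x : Fin (n+1) → ℝ => Real.log ((evC x (zeta N j) * evC x (zeta N j)⁻¹).re))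
        = fun x => Real.log (U j x * U j x + W j x * W j x) := by
      funext x
      rw [evC_mul_inv, Complex.ofReal_re, Complex.normSq_apply, hUx, hWx]
    rw [hfe, hD]
    refine HasFDerivAt.log ?_ ?_
    · exact ((U j).hasFDerivAt.mul (U j).hasFDerivAt).add
        ((W j).hasFDerivAt.mul (W j).hasFDerivAt)
    · have hns : U j a * U j a + W j a * W j a = Complex.normSq (evC a (zeta N j)) := by
        rw [hUx, hWx, Complex.normSq_apply]
      rw [hns]
      exact ne_of_gt (Complex.normSq_pos.mpr (ha j hj))
  set Φ₂ : (Fin (n+1) → ℝ) →L[ℝ] ℝ :=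
    ∑ j ∈ Idx N, (PPd b (zeta N j)).re • D j with hΦ₂
  have hS : HasFDerivAt (fun x : Fin (n+1) → ℝ =>
      (2*(N:ℝ))⁻¹ * ∑ j ∈ Idx N, (PPd b (zeta N j)).re *
        Real.log ((evC x (zeta N j) * evC x (zeta N j)⁻¹).re))
      ((2*(N:ℝ))⁻¹ • Φ₂) a :=
    (HasFDerivAt.fun_sum fun j hj => (hlog j hj).const_mul _).const_mul _
  have heq : Jd N c b = fun x : Fin (n+1) → ℝ =>
      (∑ i : Fin (n+1), ∑ k : Fin (n+1), Toep c i k * (x i * x k))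
      - (2*(N:ℝ))⁻¹ * ∑ j ∈ Idx N, (PPd b (zeta N j)).re *
          Real.log ((evC x (zeta N j) * evC x (zeta N j)⁻¹).re) := by
    funext x
    rw [Jd]
    congr 1
    · simp only [dotProduct, Matrix.mulVec]
      refine Finset.sum_congr rfl fun i _ => ?_
      rw [Finset.mul_sum]
      exact Finset.sum_congr rfl fun k _ => by ring
    · rw [div_eq_inv_mul]
  have hbig : HasFDerivAt (Jd N c b) (Φ₁ - (2*(N:ℝ))⁻¹ • Φ₂) a := by
    rw [heq]; exact hQ.sub hS
  refine ⟨hbig.differentiableAt, fun v => ?_, ?_⟩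
  · rw [hbig.fderiv]
    have happ : (Φ₁ - (2*(N:ℝ))⁻¹ • Φ₂) v = Φ₁ v - (2*(N:ℝ))⁻¹ * Φ₂ v := by
      simp
    rw [happ]
    have hΦ₁v : Φ₁ v = ∑ i : Fin (n+1), 2 * (((Toep c).mulVec a) i) * v i := by
      rw [hΦ₁]
      simp only [ContinuousLinearMap.coe_sum', Finset.sum_apply,
        ContinuousLinearMap.smul_apply, ContinuousLinearMap.add_apply,
        ContinuousLinearMap.proj_apply, smul_eq_mul]
      rw [show (∑ i : Fin (n+1), ∑ k : Fin (n+1),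
          Toep c i k * (a i * v k + a k * v i))
        = (∑ i : Fin (n+1), ∑ k : Fin (n+1), Toep c i k * (a i * v k))
          + ∑ i : Fin (n+1), ∑ k : Fin (n+1), Toep c i k * (a k * v i) by
          rw [← Finset.sum_add_distrib]
          exact Finset.sum_congr rfl fun i _ => by
            rw [← Finset.sum_add_distrib]
            exact Finset.sum_congr rfl fun k _ => by ring]
      rw [Finset.sum_comm (f := fun i k => Toep c i k * (a i * v k))]
      rw [← Finset.sum_add_distrib]
      refine Finset.sum_congr rfl fun i _ => ?_
      simp only [Matrix.mulVec, dotProduct]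
      have e : ∀ k : Fin (n+1), Toep c k i * (a k * v i) = Toep c i k * (a k * v i) :=
        fun k => by rw [Toep_symm c k i]
      rw [Finset.sum_congr rfl fun k _ => e k, ← Finset.sum_add_distrib, Finset.mul_sum,
        Finset.sum_mul]
      refine Finset.sum_congr rfl fun k _ => by ring
    have hΦ₂v : (2*(N:ℝ))⁻¹ * Φ₂ v = ∑ i : Fin (n+1), 2 * (((Tgam N b a).mulVec b) i) * v i := by
      rw [hΦ₂]
      simp only [ContinuousLinearMap.coe_sum', Finset.sum_apply,
        ContinuousLinearMap.smul_apply, smul_eq_mul, ContinuousLinearMap.add_apply, hD]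
      have hj : ∀ j ∈ Idx N, (PPd b (zeta N j)).re *
          ((U j a * U j a + W j a * W j a)⁻¹ *
            ((U j a * U j v + U j a * U j v) + (W j a * W j v + W j a * W j v)))
          = 2 * (PPd b (zeta N j) * evC v (zeta N j) / evC a (zeta N j)).re := by
        intro j _
        rw [hUx, hUx, hWx, hWx]
        exact key1 b N j (evC a (zeta N j)) (evC v (zeta N j))
      rw [Finset.sum_congr rfl hj, ← Finset.mul_sum]
      rw [show ∑ i : Fin (n+1), 2 * (((Tgam N b a).mulVec b) i) * v i
          = 2 * ∑ i : Fin (n+1), ((Tgam N b a).mulVec b) i * v i by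
        rw [Finset.mul_sum]; exact Finset.sum_congr rfl fun i _ => by ring]
      rw [key2 N b a v]
      field_simp
    rw [hΦ₁v, hΦ₂v, ← Finset.sum_sub_distrib]
    refine Finset.sum_congr rfl fun i _ => ?_
    rw [Pi.sub_apply]
    ring
  · funext i
    rw [Matrix.sub_mulVec, Pi.sub_apply, Pi.sub_apply]
    congr 1
    have hTg : ((Tgam N b a).mulVec b) i = ∑ k : Fin (n+1),
        gam N b a ((k.val : ℤ) - (i.val : ℤ)) * b k := by
      simp only [Matrix.mulVec, dotProduct]; rfl
    have hTn : ((TnA N b a).mulVec a) i = ∑ k : Fin (n+1),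
        ctil N b a ((k.val : ℤ) - (i.val : ℤ)) * a k := by
      simp only [Matrix.mulVec, dotProduct]
      exact Finset.sum_congr rfl fun k _ => by rw [show (TnA N b a) i k
        = ctil N b a ((max ((i.val : ℕ) - (k.val : ℕ)) ((k.val : ℕ) - (i.val : ℕ)) : ℕ) : ℤ)
        from rfl, ctil_max]
    rw [hTg, hTn, gam_contract N b a b i, ctil_contract N b a ha i]

end
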